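/- Let R be a commutative ring, R' a faithfully flat R-algebra, G ⊆ GL_n(R) a finite subgroup, and d a natural number. Then R[x_1,…,x_n]^G is generated as an R-algebra by its homogeneous elements of degree at most d if and only if R'[x_1,…,x_n]^G (where G acts via its image in GL_n(R')) is generated as an R'-algebra by its homogeneous elements of degree at most d. In particular β_{R'}(G) = β_R(G). -/

import Mathlib

open MvPolynomial TensorProduct

set_option synthInstance.maxHeartbeats 1000000
set_option maxHeartbeats 1000000

/-- The action of `σ ∈ GLₙ(R)` on the polynomial ring `R[x₁,…,xₙ]`,
given by `σ(f) = f(σ⁻¹ (x₁,…,xₙ))`. -/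
noncomputable def glAct {R : Type*} [CommRing R] {n : ℕ}
    (σ : Matrix.GeneralLinearGroup (Fin n) R) :
    MvPolynomial (Fin n) R →ₐ[R] MvPolynomial (Fin n) R :=
  MvPolynomial.aeval fun i =>
    ∑ j, ((σ⁻¹ : Matrix.GeneralLinearGroup (Fin n) R) : Matrix (Fin n) (Fin n) R) i j •
      MvPolynomial.X j

/-- The ring of invariants `R[x₁,…,xₙ]^G` of a subgroup `G ⊆ GLₙ(R)`,
as a subalgebra of `R[x₁,…,xₙ]`. -/
noncomputable def invariants {R : Type*} [CommRing R] {n : ℕ}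
    (G : Subgroup (Matrix.GeneralLinearGroup (Fin n) R)) :
    Subalgebra R (MvPolynomial (Fin n) R) :=
  ⨅ σ ∈ G, AlgHom.equalizer (glAct σ) (AlgHom.id R _)

/-- The map `GLₙ(R) → GLₙ(R')` induced by a ring homomorphism `R → R'`. -/
noncomputable def glMap {R R' : Type*} [CommRing R] [CommRing R'] {n : ℕ} (f : R →+* R') :
    Matrix.GeneralLinearGroup (Fin n) R →* Matrix.GeneralLinearGroup (Fin n) R' :=
  Units.map (RingHom.toMonoidHom (RingHom.mapMatrix f))

/-- `R[x₁,…,xₙ]^G` is generated as an `R`-algebra by its homogeneous elements of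
degree at most `d`. -/
def genByDeg {n : ℕ} (R : Type*) [CommRing R]
    (G : Subgroup (Matrix.GeneralLinearGroup (Fin n) R)) (d : ℕ) : Prop :=
  Algebra.adjoin R {f : MvPolynomial (Fin n) R |
    f ∈ invariants G ∧ ∃ i ≤ d, MvPolynomial.IsHomogeneous f i} = invariants G

/-- `f₁, …, fₘ` is a homogeneous system of parameters for `R[x₁,…,xₙ]^G`:
the `fᵢ` are invariant, homogeneous of positive degree, algebraically independent over `R`,
and `R[x₁,…,xₙ]^G` is a finitely generated module over `R[f₁,…,fₘ]`. -/
def IsHSOPInv {n m : ℕ} {R : Type*} [CommRing R]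
    (G : Subgroup (Matrix.GeneralLinearGroup (Fin n) R))
    (f : Fin m → MvPolynomial (Fin n) R) : Prop :=
  (∀ i, f i ∈ invariants G) ∧
  (∀ i, ∃ d : ℕ, 0 < d ∧ (f i).IsHomogeneous d) ∧
  AlgebraicIndependent R f ∧
  ∃ s : Finset (MvPolynomial (Fin n) R),
    ↑s ⊆ (invariants G : Set (MvPolynomial (Fin n) R)) ∧
    (invariants G : Set (MvPolynomial (Fin n) R)) ⊆
      (Submodule.span (Algebra.adjoin R (Set.range f)) (s : Set (MvPolynomial (Fin n) R)) :
        Submodule (Algebra.adjoin R (Set.range f)) (MvPolynomial (Fin n) R))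

/-- A commutative ring `T` is Cohen-Macaulay if for every maximal ideal `P` of `T`,
the localization `T_P` contains a regular sequence lying in its maximal ideal whose
length equals the Krull dimension of `T_P` (i.e. `depth T_P = dim T_P`). -/
def IsCohenMacaulayRing (T : Type*) [CommRing T] : Prop :=
  ∀ (P : Ideal T) (hP : P.IsMaximal),
    haveI : P.IsPrime := hP.isPrime
    ∃ rs : List (Localization.AtPrime P),
      (∀ r ∈ rs, r ∈ IsLocalRing.maximalIdeal (Localization.AtPrime P)) ∧
      RingTheory.Sequence.IsRegular (Localization.AtPrime P) rs ∧
      (rs.length : WithBot ℕ∞) = ringKrullDim (Localization.AtPrime P)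


section Aux

open MvPolynomial TensorProduct

variable {n : ℕ} {R R' : Type*} [CommRing R] [CommRing R'] [Algebra R R']

lemma mem_invariants {G : Subgroup (Matrix.GeneralLinearGroup (Fin n) R)}
    {f : MvPolynomial (Fin n) R} :
    f ∈ invariants G ↔ ∀ σ ∈ G, glAct σ f = f := by
  simp [invariants, Algebra.mem_iInf, AlgHom.mem_equalizer]

lemma glAct_X {σ : Matrix.GeneralLinearGroup (Fin n) R} (i : Fin n) :
    glAct σ (X i) = ∑ j, ((σ⁻¹ : Matrix.GeneralLinearGroup (Fin n) R) :
      Matrix (Fin n) (Fin n) R) i j • X j := by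
  simp [glAct]

lemma map_glAct (σ : Matrix.GeneralLinearGroup (Fin n) R) (f : MvPolynomial (Fin n) R) :
    MvPolynomial.map (algebraMap R R') (glAct σ f) =
      glAct (glMap (algebraMap R R') σ) (MvPolynomial.map (algebraMap R R') f) := by
  induction f using MvPolynomial.induction_on with
  | C a => simp [glAct]
  | add p q hp hq => simp [hp, hq]
  | mul_X p i hp =>
    simp only [map_mul, hp, MvPolynomial.map_X]
    congr 1
    rw [glAct_X, glAct_X, map_sum]
    congr 1
    ext j
    rw [Algebra.smul_def, Algebra.smul_def, map_mul, MvPolynomial.map_X]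
    congr 1
    have : (glMap (algebraMap R R') σ)⁻¹ = glMap (algebraMap R R') σ⁻¹ := by
      rw [← map_inv]
    rw [this]
    simp [glMap, MvPolynomial.algebraMap_eq]

lemma glAct_isHomogeneous {σ : Matrix.GeneralLinearGroup (Fin n) R}
    {f : MvPolynomial (Fin n) R} {m : ℕ} (hf : f.IsHomogeneous m) :
    (glAct σ f).IsHomogeneous m := by
  have h1 : ∀ i : Fin n, (∑ j, ((σ⁻¹ : Matrix.GeneralLinearGroup (Fin n) R) :
      Matrix (Fin n) (Fin n) R) i j • X j : MvPolynomial (Fin n) R).IsHomogeneous 1 := by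
    intro i
    apply MvPolynomial.IsHomogeneous.sum
    intro j _
    rw [Algebra.smul_def]
    exact (isHomogeneous_X _ _).C_mul _
  have := hf.aeval _ h1
  simpa [glAct] using this

lemma glAct_homogeneousComponent (σ : Matrix.GeneralLinearGroup (Fin n) R)
    (i : ℕ) (f : MvPolynomial (Fin n) R) :
    glAct σ (homogeneousComponent i f) = homogeneousComponent i (glAct σ f) := by
  conv_rhs => rw [← MvPolynomial.sum_homogeneousComponent f]
  rw [map_sum, map_sum]
  rw [Finset.sum_congr rfl (fun j _ => homogeneousComponent_of_mem
    (glAct_isHomogeneous (homogeneousComponent_isHomogeneous j f)))]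
  rw [Finset.sum_ite_eq (Finset.range (f.totalDegree + 1)) i
    (fun j => glAct σ (homogeneousComponent j f))]
  split_ifs with h
  · rfl
  · rw [Finset.mem_range, not_lt] at h
    rcases Nat.lt_or_ge f.totalDegree i with h' | h'
    · rw [homogeneousComponent_eq_zero _ _ h', map_zero]
    · omega

lemma homogeneousComponent_mem_invariants
    {G : Subgroup (Matrix.GeneralLinearGroup (Fin n) R)}
    {f : MvPolynomial (Fin n) R} (hf : f ∈ invariants G) (i : ℕ) :
    homogeneousComponent i f ∈ invariants G := by
  rw [mem_invariants] at hf ⊢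
  intro σ hσ
  rw [glAct_homogeneousComponent, hf σ hσ]

lemma homogeneousComponent_map (i : ℕ) (f : MvPolynomial (Fin n) R) :
    homogeneousComponent i (MvPolynomial.map (algebraMap R R') f) =
      MvPolynomial.map (algebraMap R R') (homogeneousComponent i f) := by
  ext d
  simp only [coeff_homogeneousComponent, MvPolynomial.coeff_map]
  split_ifs <;> simp

lemma map_mem_invariants {G : Subgroup (Matrix.GeneralLinearGroup (Fin n) R)}
    {f : MvPolynomial (Fin n) R} (hf : f ∈ invariants G) :
    MvPolynomial.map (algebraMap R R') f ∈ invariants (G.map (glMap (algebraMap R R'))) := by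
  rw [mem_invariants] at hf ⊢
  rintro σ' ⟨σ, hσ, rfl⟩
  rw [← map_glAct, hf σ hσ]

lemma range_baseChange_subtype {R : Type*} [CommRing R] {M : Type*} [AddCommGroup M]
    [Module R M] (A : Type*) [CommRing A] [Algebra R A] (p : Submodule R M) :
    LinearMap.range (p.subtype.baseChange A) = p.baseChange A := by
  apply le_antisymm
  · rintro _ ⟨t, rfl⟩
    induction t with
    | zero => simp
    | tmul r x => simpa using Submodule.tmul_mem_baseChange_of_mem r x.2
    | add t₁ t₂ h₁ h₂ => rw [map_add]; exact Submodule.add_mem _ h₁ h₂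
  · rw [Submodule.baseChange_eq_span, Submodule.span_le]
    rintro _ ⟨x, hx, rfl⟩
    exact ⟨1 ⊗ₜ ⟨x, hx⟩, rfl⟩

lemma ker_baseChange {R : Type*} [CommRing R] {M N : Type*} [AddCommGroup M] [Module R M]
    [AddCommGroup N] [Module R N] (A : Type*) [CommRing A] [Algebra R A] [Module.Flat R A]
    (f : M →ₗ[R] N) : LinearMap.ker (f.baseChange A) = (LinearMap.ker f).baseChange A := by
  have h1 := Module.Flat.lTensor_exact A f.exact_subtype_ker_map
  rw [LinearMap.exact_iff] at h1
  ext t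
  have e1 : f.baseChange A t = f.lTensor A t := congrFun (f.baseChange_eq_ltensor (A := A)) t
  have e2 : ∀ u, (LinearMap.ker f).subtype.baseChange A u
      = (LinearMap.ker f).subtype.lTensor A u :=
    fun u => congrFun (LinearMap.baseChange_eq_ltensor (A := A) _) u
  constructor
  · intro ht
    rw [LinearMap.mem_ker, e1] at ht
    have : t ∈ LinearMap.range ((LinearMap.ker f).subtype.lTensor A) := h1 ▸ ht
    obtain ⟨u, hu⟩ := this
    rw [← range_baseChange_subtype]
    exact ⟨u, by rw [e2]; exact hu⟩
  · intro ht
    rw [← range_baseChange_subtype] at ht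
    obtain ⟨u, hu⟩ := ht
    rw [LinearMap.mem_ker, e1, ← hu, e2]
    have : (LinearMap.ker f).subtype.lTensor A u
        ∈ LinearMap.ker (f.lTensor A) := by
      rw [h1]; exact LinearMap.mem_range_self _ u
    exact this

lemma le_of_baseChange_eq {R : Type*} [CommRing R] {P : Type*} [AddCommGroup P] [Module R P]
    (A : Type*) [CommRing A] [Algebra R A] [Module.FaithfullyFlat R A] {N M : Submodule R P}
    (h : N.baseChange A = M.baseChange A) : M ≤ N := by
  set q : M →ₗ[R] P ⧸ N := N.mkQ ∘ₗ M.subtype with hq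
  have hker : M.baseChange A ≤ LinearMap.ker (N.mkQ.baseChange A) := by
    rw [← h, Submodule.baseChange_eq_span, Submodule.span_le]
    rintro _ ⟨x, hx, rfl⟩
    simp only [SetLike.mem_coe, LinearMap.mem_ker]
    have : (TensorProduct.mk R A P 1) x = (1 : A) ⊗ₜ x := rfl
    rw [this, LinearMap.baseChange_tmul, Submodule.mkQ_apply,
      (Submodule.Quotient.mk_eq_zero N).mpr hx, tmul_zero]
  have hz : q.lTensor A = 0 := by
    apply LinearMap.ext
    intro t
    rw [hq, LinearMap.lTensor_comp, LinearMap.comp_apply]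
    have h1 : M.subtype.lTensor A t = M.subtype.baseChange A t :=
      (congrFun (LinearMap.baseChange_eq_ltensor (A := A) _) t).symm
    have h2 : M.subtype.baseChange A t ∈ M.baseChange A := by
      rw [← range_baseChange_subtype]
      exact LinearMap.mem_range_self _ t
    have h3 := hker h2
    rw [LinearMap.mem_ker] at h3
    rw [h1, LinearMap.zero_apply, ← h3]
    exact (congrFun (LinearMap.baseChange_eq_ltensor (A := A) N.mkQ) _).symm
  have hq0 : q = 0 := (Module.FaithfullyFlat.zero_iff_lTensor_zero R A q).mpr hz
  intro x hx
  have : N.mkQ x = 0 := by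
    have := LinearMap.congr_fun hq0 ⟨x, hx⟩
    simpa [hq] using this
  rwa [← Submodule.Quotient.mk_eq_zero N]

lemma e_baseChange_glAct (σ : Matrix.GeneralLinearGroup (Fin n) R)
    (t : R' ⊗[R] MvPolynomial (Fin n) R) :
    algebraTensorAlgEquiv R R' ((glAct σ).toLinearMap.baseChange R' t) =
      glAct (glMap (algebraMap R R') σ) (algebraTensorAlgEquiv R R' t) := by
  induction t with
  | zero => simp
  | tmul r p => simp [map_glAct, map_smul]
  | add t₁ t₂ h₁ h₂ => simp only [map_add, h₁, h₂]

lemma map_baseChange_eq_span (P : Submodule R (MvPolynomial (Fin n) R)) :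
    (P.baseChange R').map (algebraTensorAlgEquiv R R' (σ := Fin n)).toLinearMap =
      Submodule.span R' (⇑(MvPolynomial.map (algebraMap R R')) '' (P : Set _)) := by
  rw [Submodule.baseChange_eq_span, Submodule.map_span, Submodule.map_coe]
  congr 1
  rw [← Set.image_comp]
  apply Set.image_congr
  intro p _
  simp [Function.comp]

lemma span_map_invariants {G : Subgroup (Matrix.GeneralLinearGroup (Fin n) R)} [Finite G]
    [Module.Flat R R'] :
    Subalgebra.toSubmodule (invariants (G.map (glMap (algebraMap R R')))) =
      Submodule.span R' (⇑(MvPolynomial.map (algebraMap R R')) ''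
        ((invariants G : Set (MvPolynomial (Fin n) R)))) := by
  classical
  have : Fintype G := Fintype.ofFinite G
  set e := MvPolynomial.algebraTensorAlgEquiv R R' (σ := Fin n) with he
  set T : MvPolynomial (Fin n) R →ₗ[R] (G → MvPolynomial (Fin n) R) :=
    LinearMap.pi (fun σ : G => (glAct (σ : Matrix.GeneralLinearGroup (Fin n) R)).toLinearMap
      - LinearMap.id) with hT
  have hK : Subalgebra.toSubmodule (invariants G) = LinearMap.ker T := by
    ext f
    simp only [Subalgebra.mem_toSubmodule, mem_invariants, LinearMap.mem_ker, hT]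
    constructor
    · intro h
      ext σ
      simp [LinearMap.pi_apply, sub_eq_zero, h σ.1 σ.2]
    · intro h σ hσ
      have := congrFun h ⟨σ, hσ⟩
      simpa [LinearMap.pi_apply, sub_eq_zero] using this
  have hπT : ∀ u : R' ⊗[R] MvPolynomial (Fin n) R,
      TensorProduct.piRightHom R R' R' (fun _ : G => MvPolynomial (Fin n) R)
          (T.baseChange R' u) =
        fun σ : G => ((glAct (σ : Matrix.GeneralLinearGroup (Fin n) R)).toLinearMap
          - LinearMap.id).baseChange R' u := by
    intro u
    induction u with
    | zero => funext σ; simp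
    | tmul r p =>
      funext σ
      simp [hT, LinearMap.pi_apply, tmul_sub]
    | add u₁ u₂ h₁ h₂ =>
      funext σ
      simp only [map_add, h₁, h₂, Pi.add_apply]
  have key : ∀ t : R' ⊗[R] MvPolynomial (Fin n) R,
      e t ∈ invariants (G.map (glMap (algebraMap R R'))) ↔
        t ∈ (LinearMap.ker T).baseChange R' := by
    intro t
    rw [← ker_baseChange, LinearMap.mem_ker]
    have step : ∀ σ : G, (((glAct (σ : Matrix.GeneralLinearGroup (Fin n) R)).toLinearMap
        - LinearMap.id).baseChange R' t = 0 ↔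
          glAct (glMap (algebraMap R R') (σ : Matrix.GeneralLinearGroup (Fin n) R)) (e t)
            = e t) := by
      intro σ
      rw [LinearMap.baseChange_sub, LinearMap.sub_apply, LinearMap.baseChange_id,
        LinearMap.id_apply]
      constructor
      · intro h0
        have := congrArg e h0
        rw [map_sub, map_zero, e_baseChange_glAct, sub_eq_zero] at this
        exact this
      · intro h0
        have : e ((glAct (σ : Matrix.GeneralLinearGroup (Fin n) R)).toLinearMap.baseChange R' t
            - t) = 0 := by
          rw [map_sub, e_baseChange_glAct, h0, sub_self]
        exact e.injective (by simpa using this)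
    constructor
    · intro hinv
      have h0 : ∀ σ : G, ((glAct (σ : Matrix.GeneralLinearGroup (Fin n) R)).toLinearMap
          - LinearMap.id).baseChange R' t = 0 := by
        intro σ
        rw [step σ]
        rw [mem_invariants] at hinv
        exact hinv _ ⟨σ.1, σ.2, rfl⟩
      apply (TensorProduct.piRight R R' R' (fun _ : G => MvPolynomial (Fin n) R)).injective
      rw [map_zero, TensorProduct.piRight_apply, hπT]
      funext σ
      exact h0 σ
    · intro h0
      rw [mem_invariants]
      rintro σ' ⟨σ, hσ, rfl⟩
      rw [← step ⟨σ, hσ⟩]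
      have := congrArg (TensorProduct.piRightHom R R' R'
        (fun _ : G => MvPolynomial (Fin n) R)) h0
      rw [hπT, map_zero] at this
      exact congrFun this ⟨σ, hσ⟩
  ext f'
  constructor
  · intro hf'
    rw [← Subalgebra.coe_toSubmodule, ← map_baseChange_eq_span, hK]
    refine ⟨e.symm f', ?_, e.apply_symm_apply f'⟩
    exact (key (e.symm f')).mp (by simpa using hf')
  · intro hf'
    rw [← Subalgebra.coe_toSubmodule, ← map_baseChange_eq_span, hK] at hf'
    obtain ⟨t, ht, rfl⟩ := hf'
    simpa using (key t).mpr ht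

lemma genByDeg_base_change [Module.FaithfullyFlat R R']
    (G : Subgroup (Matrix.GeneralLinearGroup (Fin n) R)) [Finite G] (d : ℕ) :
    genByDeg R' (G.map (glMap (algebraMap R R'))) d ↔ genByDeg R G d := by
  classical
  set gens : Set (MvPolynomial (Fin n) R) := {f : MvPolynomial (Fin n) R |
    f ∈ invariants G ∧ ∃ i ≤ d, MvPolynomial.IsHomogeneous f i} with hgens
  set gens' : Set (MvPolynomial (Fin n) R') := {f : MvPolynomial (Fin n) R' |
    f ∈ invariants (G.map (glMap (algebraMap R R'))) ∧
      ∃ i ≤ d, MvPolynomial.IsHomogeneous f i} with hgens'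
  have hmapgens : ∀ g ∈ Algebra.adjoin R gens,
      MvPolynomial.map (algebraMap R R') g ∈ Algebra.adjoin R' gens' := by
    intro g hg
    induction hg using Algebra.adjoin_induction with
    | mem x hx =>
      refine Algebra.subset_adjoin ⟨map_mem_invariants hx.1, ?_⟩
      obtain ⟨i, hid, hh⟩ := hx.2
      exact ⟨i, hid, hh.map _⟩
    | algebraMap r =>
      rw [MvPolynomial.algebraMap_eq, MvPolynomial.map_C, ← MvPolynomial.algebraMap_eq]
      exact Subalgebra.algebraMap_mem _ (algebraMap R R' r)
    | add x y hx hy ihx ihy => rw [map_add]; exact add_mem ihx ihy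
    | mul x y hx hy ihx ihy => rw [map_mul]; exact mul_mem ihx ihy
  constructor
  · intro h
    unfold genByDeg at h ⊢
    apply le_antisymm
    · exact Algebra.adjoin_le fun f hf => hf.1
    · set N := Subalgebra.toSubmodule (Algebra.adjoin R gens) with hN
      set M := Subalgebra.toSubmodule (invariants G) with hM
      have hNM : N ≤ M := by
        intro x hx
        rw [hN, Subalgebra.mem_toSubmodule] at hx
        rw [hM, Subalgebra.mem_toSubmodule]
        exact Algebra.adjoin_le (fun f hf => hf.1) hx
      -- span R' (φ '' N) is closed under multiplication and contains 1
      have hone : (1 : MvPolynomial (Fin n) R') ∈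
          Submodule.span R' (⇑(MvPolynomial.map (algebraMap R R')) '' (N : Set (MvPolynomial (Fin n) R))) := by
        apply Submodule.subset_span
        exact ⟨1, by simpa [hN] using (Algebra.adjoin R gens).one_mem, map_one _⟩
      have hmul : ∀ x y, x ∈ Submodule.span R'
            (⇑(MvPolynomial.map (algebraMap R R')) '' (N : Set (MvPolynomial (Fin n) R))) →
          y ∈ Submodule.span R' (⇑(MvPolynomial.map (algebraMap R R')) '' (N : Set (MvPolynomial (Fin n) R))) →
          x * y ∈ Submodule.span R'
            (⇑(MvPolynomial.map (algebraMap R R')) '' (N : Set (MvPolynomial (Fin n) R))) := by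
        intro x y hx hy
        have := Submodule.mul_mem_mul hx hy
        rw [Submodule.span_mul_span] at this
        refine Submodule.span_le.mpr ?_ this
        rintro _ ⟨a, ⟨ga, hga, rfl⟩, b, ⟨gb, hgb, rfl⟩, rfl⟩
        apply Submodule.subset_span
        refine ⟨ga * gb, ?_, map_mul _ _ _⟩
        rw [hN, SetLike.mem_coe, Subalgebra.mem_toSubmodule] at hga hgb ⊢
        exact mul_mem hga hgb
      set B : Subalgebra R' (MvPolynomial (Fin n) R') :=
        (Submodule.span R' (⇑(MvPolynomial.map (algebraMap R R')) '' (N : Set (MvPolynomial (Fin n) R)))).toSubalgebra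
          hone hmul with hB
      -- the degree-≤-d invariants of R' lie in the span of φ '' N
      have hgens'B : gens' ⊆ B := by
        rintro f' ⟨hf'inv, i, hid, hfhom⟩
        have h1 : f' ∈ Submodule.span R'
            (⇑(MvPolynomial.map (algebraMap R R')) '' (M : Set (MvPolynomial (Fin n) R))) := by
          rw [hM, Subalgebra.coe_toSubmodule, ← span_map_invariants,
            Subalgebra.mem_toSubmodule]
          exact hf'inv
        have h2 : homogeneousComponent i f' = f' := by
          rw [homogeneousComponent_of_mem hfhom]
          simp
        have h3 : (Submodule.span R'
              (⇑(MvPolynomial.map (algebraMap R R')) '' (M : Set (MvPolynomial (Fin n) R)))).map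
              (homogeneousComponent i) ≤
            Submodule.span R' (⇑(MvPolynomial.map (algebraMap R R')) '' (N : Set (MvPolynomial (Fin n) R))) := by
          rw [Submodule.map_span, ← Set.image_comp]
          apply Submodule.span_le.mpr
          rintro _ ⟨g, hg, rfl⟩
          apply Submodule.subset_span
          refine ⟨homogeneousComponent i g, ?_, ?_⟩
          · rw [SetLike.mem_coe, hN, Subalgebra.mem_toSubmodule]
            apply Algebra.subset_adjoin
            rw [hM, SetLike.mem_coe, Subalgebra.mem_toSubmodule] at hg
            exact ⟨homogeneousComponent_mem_invariants hg i,
              i, hid, homogeneousComponent_isHomogeneous i g⟩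
          · exact (homogeneousComponent_map i g).symm
        have h4 : f' ∈ Submodule.span R'
            (⇑(MvPolynomial.map (algebraMap R R')) '' (N : Set (MvPolynomial (Fin n) R))) := by
          rw [← h2]
          exact h3 ⟨f', h1, rfl⟩
        exact h4
      have hspan : Submodule.span R' (⇑(MvPolynomial.map (algebraMap R R')) '' (N : Set (MvPolynomial (Fin n) R))) =
          Submodule.span R' (⇑(MvPolynomial.map (algebraMap R R')) '' (M : Set (MvPolynomial (Fin n) R))) := by
        apply le_antisymm
        · exact Submodule.span_mono (Set.image_mono hNM)
        · have : Subalgebra.toSubmodule (invariants (G.map (glMap (algebraMap R R')))) ≤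
              Subalgebra.toSubmodule B := by
            rw [← h]
            intro x hx
            rw [Subalgebra.mem_toSubmodule] at hx ⊢
            exact Algebra.adjoin_le hgens'B hx
          rw [span_map_invariants] at this
          rw [hM, Subalgebra.coe_toSubmodule]
          rw [hB, Submodule.toSubalgebra_toSubmodule] at this
          exact this
      have hbc : N.baseChange R' = M.baseChange R' := by
        apply Submodule.map_injective_of_injective
          (f := (algebraTensorAlgEquiv R R' (σ := Fin n)).toLinearMap)
          (algebraTensorAlgEquiv R R' (σ := Fin n)).injective
        rw [map_baseChange_eq_span, map_baseChange_eq_span, hspan]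
      intro x hx
      have : x ∈ N := le_of_baseChange_eq R' hbc (by
        rw [hM, Subalgebra.mem_toSubmodule]; exact hx)
      rwa [hN, Subalgebra.mem_toSubmodule] at this
  · intro h
    unfold genByDeg at h ⊢
    apply le_antisymm
    · exact Algebra.adjoin_le fun f hf => hf.1
    · intro f' hf'
      have h1 : f' ∈ Submodule.span R' (⇑(MvPolynomial.map (algebraMap R R')) ''
          (invariants G : Set (MvPolynomial (Fin n) R))) := by
        rw [← span_map_invariants, Subalgebra.mem_toSubmodule]
        exact hf'
      have h2 : Submodule.span R' (⇑(MvPolynomial.map (algebraMap R R')) ''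
          (invariants G : Set (MvPolynomial (Fin n) R))) ≤
          Subalgebra.toSubmodule (Algebra.adjoin R' gens') := by
        apply Submodule.span_le.mpr
        rintro _ ⟨g, hg, rfl⟩
        rw [SetLike.mem_coe, Subalgebra.mem_toSubmodule]
        apply hmapgens
        rw [h]
        exact hg
      have := h2 h1
      rwa [Subalgebra.mem_toSubmodule] at this

end Aux

/-- If `R'` is a faithfully flat `R`-algebra and `G ⊆ GLₙ(R)` is a finite
subgroup, then for every `d : ℕ`, `R[x₁,…,xₙ]^G` is generated as an `R`-algebra by its
homogeneous elements of degree at most `d` iff `R'[x₁,…,xₙ]^G` is generated as an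
`R'`-algebra by its homogeneous elements of degree at most `d`; in particular
`β_{R'}(G) = β_R(G)`. -/
theorem stmt_1 {n : ℕ} (R R' : Type*) [CommRing R] [CommRing R'] [Algebra R R']
    [Module.FaithfullyFlat R R'] (G : Subgroup (Matrix.GeneralLinearGroup (Fin n) R))
    [Finite G] :
    (∀ d : ℕ, genByDeg R' (G.map (glMap (algebraMap R R'))) d ↔ genByDeg R G d) ∧
    sInf {d : ℕ | genByDeg R' (G.map (glMap (algebraMap R R'))) d} =
      sInf {d : ℕ | genByDeg R G d} := by
  constructor
  · intro d
    exact genByDeg_base_change G d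
  · have hset : {d : ℕ | genByDeg R' (G.map (glMap (algebraMap R R'))) d} =
        {d : ℕ | genByDeg R G d} := by
      ext d
      exact genByDeg_base_change G d
    rw [hset]
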